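/- Let H be a separable Hilbert space, J ∈ B(H) skew-adjoint, R ∈ B(H) self-adjoint nonnegative with dim ker R finite, and suppose every closed subspace V ⊆ ker R that is invariant under J equals {0}. Then for m = dim ker R, the operator ∑_{j=0}^{m} J^j R (J*)^j is positive, i.e., ⟨∑_{j=0}^{m} J^j R (J*)^j x, x⟩ > 0 for all nonzero x ∈ H. -/

import Mathlib

open ContinuousLinearMap
open scoped InnerProductSpace

lemma apply_eq_zero_of_re_inner_eq_zero
    {H : Type*} [NormedAddCommGroup H] [InnerProductSpace ℂ H] [CompleteSpace H]
    {R : H →L[ℂ] H} (hR : R.IsPositive) {y : H}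
    (h : (⟪R y, y⟫_ℂ).re = 0) : R y = 0 := by
  have hC : 0 ≤ (⟪R (R y), R y⟫_ℂ).re := hR.re_inner_nonneg_left (R y)
  have hzz : (⟪R y, R y⟫_ℂ).re = ‖R y‖ ^ 2 := by
    have := inner_self_eq_norm_sq (𝕜 := ℂ) (R y); simpa using this
  have him : (⟪R y, R y⟫_ℂ).im = 0 := inner_self_im (𝕜 := ℂ) (R y)
  have key : ∀ t : ℝ, 0 ≤ 2 * t * ‖R y‖ ^ 2 + t ^ 2 * (⟪R (R y), R y⟫_ℂ).re := by
    intro t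
    have h0 : 0 ≤ (⟪R (y + (t : ℂ) • R y), y + (t : ℂ) • R y⟫_ℂ).re :=
      hR.re_inner_nonneg_left _
    have hRzy : ⟪R (R y), y⟫_ℂ = ⟪R y, R y⟫_ℂ := by
      have h1 := ContinuousLinearMap.adjoint_inner_left R y (R y)
      rw [hR.isSelfAdjoint.adjoint_eq] at h1
      exact h1
    have expand : ⟪R (y + (t : ℂ) • R y), y + (t : ℂ) • R y⟫_ℂ
        = ⟪R y, y⟫_ℂ + (t : ℂ) * ⟪R y, R y⟫_ℂ + (t : ℂ) * ⟪R y, R y⟫_ℂ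
          + (t : ℂ) * (t : ℂ) * ⟪R (R y), R y⟫_ℂ := by
      rw [map_add, map_smul, inner_add_left, inner_add_right, inner_add_right,
        inner_smul_left, inner_smul_right, inner_smul_left, inner_smul_right,
        hRzy, Complex.conj_ofReal]
      ring
    rw [expand] at h0
    simp only [Complex.add_re, Complex.mul_re, Complex.mul_im, Complex.ofReal_re,
      Complex.ofReal_im, h, hzz, him] at h0
    nlinarith [h0]
  have hn : ‖R y‖ ^ 2 ≤ 0 := by
    by_contra hpos
    push_neg at hpos
    set C := (⟪R (R y), R y⟫_ℂ).re with hCdef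
    have hC1 : 0 < C + 1 := by linarith
    have hk := key (-(‖R y‖ ^ 2) / (C + 1))
    have e : 2 * (-(‖R y‖ ^ 2) / (C + 1)) * ‖R y‖ ^ 2 + (-(‖R y‖ ^ 2) / (C + 1)) ^ 2 * C
        = (‖R y‖ ^ 2) ^ 2 * (-(C + 2)) / (C + 1) ^ 2 := by
      field_simp
      ring
    rw [e] at hk
    have hneg : (‖R y‖ ^ 2) ^ 2 * (-(C + 2)) < 0 :=
      mul_neg_of_pos_of_neg (pow_pos hpos 2) (by linarith)
    have := div_neg_of_neg_of_pos hneg (pow_pos hC1 2)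
    linarith
  have hz0 : ‖R y‖ ^ 2 = 0 := le_antisymm hn (by positivity)
  exact norm_eq_zero.mp (pow_eq_zero_iff two_ne_zero |>.mp hz0)

/-- if every closed `J`-invariant subspace of `ker R` is trivial, then with
`m = dim ker R` the operator `∑_{j=0}^m J^j R (J*)^j` is positive. -/
theorem sum_pos_of_no_invariant_subspace
    {H : Type*} [NormedAddCommGroup H] [InnerProductSpace ℂ H]
    [CompleteSpace H] [TopologicalSpace.SeparableSpace H]
    (J R : H →L[ℂ] H)
    (hJ : ContinuousLinearMap.adjoint J = -J)
    (hR : R.IsPositive)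
    [FiniteDimensional ℂ (LinearMap.ker (R : H →ₗ[ℂ] H))]
    (hinv : ∀ V : Submodule ℂ H, IsClosed (V : Set H) → V ≤ LinearMap.ker (R : H →ₗ[ℂ] H) →
      (∀ x ∈ V, J x ∈ V) → V = ⊥) :
    ∀ x : H, x ≠ 0 →
      0 < (⟪(∑ j ∈ Finset.range (Module.finrank ℂ (LinearMap.ker (R : H →ₗ[ℂ] H)) + 1),
          (J ^ j) * R * (ContinuousLinearMap.adjoint J) ^ j) x, x⟫_ℂ).re := by
  intro x hx
  set m := Module.finrank ℂ (LinearMap.ker (R : H →ₗ[ℂ] H)) with hm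
  -- each term equals the quadratic form of R at (J*)^j x
  have hterm : ∀ j : ℕ,
      ⟪((J ^ j) * R * (ContinuousLinearMap.adjoint J) ^ j) x, x⟫_ℂ
        = ⟪R (((ContinuousLinearMap.adjoint J) ^ j) x),
            ((ContinuousLinearMap.adjoint J) ^ j) x⟫_ℂ := by
    intro j
    have hadj : ContinuousLinearMap.adjoint (J ^ j)
        = (ContinuousLinearMap.adjoint J) ^ j := by
      rw [← ContinuousLinearMap.star_eq_adjoint, ← ContinuousLinearMap.star_eq_adjoint,
        star_pow]
    have h1 : ((J ^ j) * R * (ContinuousLinearMap.adjoint J) ^ j) x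
        = (J ^ j) (R (((ContinuousLinearMap.adjoint J) ^ j) x)) := rfl
    rw [h1, ← ContinuousLinearMap.adjoint_inner_right (J ^ j), hadj]
  -- the sum expands
  have hsum : (⟪(∑ j ∈ Finset.range (m + 1),
        (J ^ j) * R * (ContinuousLinearMap.adjoint J) ^ j) x, x⟫_ℂ).re
      = ∑ j ∈ Finset.range (m + 1),
          (⟪R (((ContinuousLinearMap.adjoint J) ^ j) x),
            ((ContinuousLinearMap.adjoint J) ^ j) x⟫_ℂ).re := by
    rw [ContinuousLinearMap.sum_apply, sum_inner, Complex.re_sum]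
    exact Finset.sum_congr rfl fun j _ => by rw [hterm j]
  rw [hsum]
  have hnonneg : ∀ j ∈ Finset.range (m + 1),
      0 ≤ (⟪R (((ContinuousLinearMap.adjoint J) ^ j) x),
            ((ContinuousLinearMap.adjoint J) ^ j) x⟫_ℂ).re :=
    fun j _ => hR.re_inner_nonneg_left _
  rcases lt_or_eq_of_le (Finset.sum_nonneg hnonneg) with hpos | hzero
  · exact hpos
  exfalso
  -- all terms vanish
  have hall : ∀ j ∈ Finset.range (m + 1),
      R (((ContinuousLinearMap.adjoint J) ^ j) x) = 0 := by
    intro j hj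
    refine apply_eq_zero_of_re_inner_eq_zero hR ?_
    exact (Finset.sum_eq_zero_iff_of_nonneg hnonneg).mp hzero.symm j hj
  -- hence J^j x ∈ ker R for j ≤ m
  have hpowJ : ∀ j : ℕ, ((ContinuousLinearMap.adjoint J) ^ j) x
      = ((-1 : ℂ) ^ j) • ((J ^ j) x) := by
    intro j
    rw [hJ, ← neg_one_smul ℂ J, smul_pow]
    simp
  have hker : ∀ j : ℕ, j ≤ m → (J ^ j) x ∈ LinearMap.ker (R : H →ₗ[ℂ] H) := by
    intro j hj
    have h0 := hall j (Finset.mem_range.mpr (Nat.lt_succ_of_le hj))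
    rw [hpowJ j, map_smul, smul_eq_zero] at h0
    rcases h0 with h0 | h0
    · exact absurd h0 (by simp)
    · exact LinearMap.mem_ker.mpr h0
  -- the chain of spans
  set v : ℕ → H := fun j => (J ^ j) x with hv
  set V : ℕ → Submodule ℂ H := fun n => Submodule.span ℂ (v '' Set.Iic n) with hV
  have hfin : ∀ n, FiniteDimensional ℂ (V n) := fun n =>
    FiniteDimensional.span_of_finite ℂ ((Set.finite_Iic n).image v)
  have hxV : ∀ n, x ∈ V n := by
    intro n
    apply Submodule.subset_span
    exact ⟨0, Set.mem_Iic.mpr (Nat.zero_le n), by simp [hv]⟩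
  have hVker : ∀ n, n ≤ m → V n ≤ LinearMap.ker (R : H →ₗ[ℂ] H) := by
    intro n hn
    apply Submodule.span_le.mpr
    rintro _ ⟨j, hj, rfl⟩
    exact hker j (le_trans hj hn)
  -- find n < m with v (n+1) ∈ V n  (or derive contradiction directly if m = 0)
  have hmain : ∃ n, n < m ∧ v (n + 1) ∈ V n := by
    by_contra hcon
    push_neg at hcon
    have hmono : ∀ n, V n ≤ V (n + 1) := fun n =>
      Submodule.span_mono (Set.image_mono (f := v) (Set.Iic_subset_Iic.mpr (Nat.le_succ n)))
    have hrank : ∀ n, n ≤ m → n + 1 ≤ Module.finrank ℂ (V n) := by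
      intro n
      induction n with
      | zero =>
        intro _
        have hne : V 0 ≠ ⊥ := by
          intro hbot
          exact hx (by simpa [hbot] using hxV 0)
        haveI := hfin 0
        have h0 : Module.finrank ℂ (V 0) ≠ 0 := fun h =>
          hne ((Submodule.finrank_eq_zero (S := V 0)).mp h)
        omega
      | succ n ih =>
        intro hn
        have hlt : V n < V (n + 1) := by
          refine lt_of_le_of_ne (hmono n) ?_
          intro heq
          apply hcon n (Nat.lt_of_succ_le hn)
          have : v (n + 1) ∈ V (n + 1) :=
            Submodule.subset_span ⟨n + 1, Set.mem_Iic.mpr le_rfl, rfl⟩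
          rwa [← heq] at this
        haveI := hfin (n + 1)
        have h2 := Submodule.finrank_lt_finrank_of_lt hlt
        have h3 := ih (Nat.le_of_succ_le hn)
        omega
    have h4 := hrank m le_rfl
    haveI := hfin m
    have h5 : Module.finrank ℂ (V m) ≤ m := by
      rw [hm]
      exact Submodule.finrank_mono (hVker m le_rfl)
    omega
  obtain ⟨n, hnm, hvn⟩ := hmain
  -- V n is a closed J-invariant subspace of ker R containing x
  haveI := hfin n
  have hclosed : IsClosed ((V n : Submodule ℂ H) : Set H) :=
    Submodule.closed_of_finiteDimensional (V n)
  have hJinv : ∀ y ∈ V n, J y ∈ V n := by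
    intro y hy
    induction hy using Submodule.span_induction with
    | mem z hz =>
      obtain ⟨j, hj, rfl⟩ := hz
      have hJv : J (v j) = v (j + 1) := by
        simp only [hv]
        rw [pow_succ']
        rfl
      rw [hJv]
      rcases lt_or_eq_of_le (Set.mem_Iic.mp hj) with hjn | hjn
      · exact Submodule.subset_span ⟨j + 1, Set.mem_Iic.mpr hjn, rfl⟩
      · rw [hjn]; exact hvn
    | zero => simp
    | add a b _ _ ha hb => rw [map_add]; exact (V n).add_mem ha hb
    | smul c a _ ha => rw [map_smul]; exact (V n).smul_mem c ha
  have hbot := hinv (V n) hclosed (hVker n (Nat.le_of_lt hnm)) hJinv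
  exact hx (by simpa [hbot] using hxV n)
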